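/- Let T be a topologically recurrent continuous linear operator on a complex Hausdorff topological vector space X. Then for every λ ∈ ℂ with |λ| ≠ 1, the operator T − λ·I has dense range in X. Consequently, for every complex polynomial p having no root of modulus 1, the operator p(T) has dense range in X. -/

import Mathlib

open Filter Topology Set

/-- `T` is topologically recurrent. -/
def TopologicallyRecurrent {X : Type*} [TopologicalSpace X] (T : X → X) : Prop :=
  ∀ U : Set X, IsOpen U → U.Nonempty → ∃ n : ℕ, 1 ≤ n ∧ (T^[n] '' U ∩ U).Nonempty

open Pointwise

-- Part 1 as a standalone lemma
theorem aux_dense {X : Type*} [AddCommGroup X] [Module ℂ X] [TopologicalSpace X]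
    [IsTopologicalAddGroup X] [ContinuousSMul ℂ X] [T2Space X]
    (T : X →L[ℂ] X)
    (hrec : ∀ U : Set X, IsOpen U → U.Nonempty → ∃ n : ℕ, 1 ≤ n ∧ ((⇑T)^[n] '' U ∩ U).Nonempty)
    (lam : ℂ) (hlam : ‖lam‖ ≠ 1) :
    DenseRange fun x : X => T x - lam • x := by
  set S : X →L[ℂ] X := T - lam • ContinuousLinearMap.id ℂ X with hSdef
  have hSapp : ∀ x : X, S x = T x - lam • x := fun x => rfl
  have hfun : (fun x : X => T x - lam • x) = ⇑S := by ext x; rw [hSapp]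
  rw [hfun]
  set M : Submodule ℂ X := (LinearMap.range (S : X →ₗ[ℂ] X)).topologicalClosure with hMdef
  -- iterate identity
  have hiter : ∀ (n : ℕ) (x : X), (⇑T)^[n] x - lam ^ n • x ∈ LinearMap.range (S : X →ₗ[ℂ] X) := by
    intro n
    induction n with
    | zero => intro x; simp
    | succ n ih =>
      intro x
      obtain ⟨z, hz⟩ := ih x
      refine ⟨T z + lam ^ n • x, ?_⟩
      have h1 : (⇑T)^[n+1] x = T ((⇑T)^[n] x) := Function.iterate_succ_apply' _ _ _
      have h2 : (⇑T)^[n] x = S z + lam ^ n • x := by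
        rw [show S z = (S : X →ₗ[ℂ] X) z from rfl, hz]; abel
      rw [h1, h2]
      simp only [ContinuousLinearMap.coe_coe, hSapp, map_add, map_sub, map_smul]
      rw [pow_succ]
      module
  by_contra hnd
  rw [DenseRange, dense_iff_closure_eq, ← Ne, ← nonempty_compl] at hnd
  obtain ⟨x₀, hx₀⟩ := hnd
  have hx₀M : x₀ ∉ (M : Set X) := by
    intro h
    apply hx₀
    have : (M : Set X) = closure (Set.range ⇑S) := by
      rw [hMdef, Submodule.topologicalClosure_coe, LinearMap.coe_range, ContinuousLinearMap.coe_coe]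
    rwa [← this]
  -- neighborhood V of 0 avoiding M after translation
  have hVex : ∀ᶠ v in 𝓝 (0 : X), x₀ + v ∉ (M : Set X) := by
    have hop : IsOpen ((M : Set X)ᶜ) := (Submodule.isClosed_topologicalClosure _).isOpen_compl
    have hten : Tendsto (fun v : X => x₀ + v) (𝓝 0) (𝓝 x₀) := by
      have : Continuous (fun v : X => x₀ + v) := continuous_const.add continuous_id
      simpa using this.tendsto (0 : X)
    exact hten.eventually_mem (hop.mem_nhds hx₀M)
  obtain ⟨V, hVnhds, hV⟩ := Filter.eventually_iff_exists_mem.mp hVex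
  -- μ with |μ| < 1
  set μ : ℂ := if ‖lam‖ < 1 then lam else lam⁻¹ with hμdef
  have hμ : ‖μ‖ < 1 := by
    rw [hμdef]
    split_ifs with h
    · exact h
    · have h1 : 1 < ‖lam‖ := lt_of_le_of_ne (not_lt.mp h) (Ne.symm hlam)
      rw [norm_inv]
      have : (0:ℝ) < ‖lam‖ := by linarith
      rw [inv_lt_one_iff₀]; right; exact h1
  set C : ℝ := (1 - ‖μ‖)⁻¹ with hCdef
  have hCpos : 0 < C := by
    rw [hCdef]; apply inv_pos.mpr; linarith
  have hC1 : 1 ≤ C := by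
    rw [hCdef]
    rw [le_inv_comm₀ one_pos (by linarith)]
    simp [norm_nonneg μ]
  -- choose V₁ with V₁ + V₁ ⊆ V
  obtain ⟨V₁, hV₁nhds, hV₁⟩ := exists_nhds_zero_half hVnhds
  -- choose balanced B ⊆ (C:ℂ)⁻¹ • V₁
  have hCne : ((C:ℂ)) ≠ 0 := by
    simp only [ne_eq, Complex.ofReal_eq_zero]; exact ne_of_gt hCpos
  have hV₂nhds : ((((C:ℂ))⁻¹ • V₁ : Set X)) ∈ 𝓝 (0 : X) :=
    (set_smul_mem_nhds_zero_iff (inv_ne_zero hCne)).mpr hV₁nhds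
  obtain ⟨B, ⟨hBnhds, hBbal⟩, hBsub⟩ := (nhds_basis_balanced ℂ X).mem_iff.mp hV₂nhds
  -- open balanced B'
  set B' : Set X := interior B with hB'def
  have hB'0 : (0:X) ∈ B' := mem_interior_iff_mem_nhds.mpr hBnhds
  have hB'bal : Balanced ℂ B' := hBbal.interior hB'0
  have hB'sub : B' ⊆ (((C:ℂ))⁻¹ • V₁ : Set X) := interior_subset.trans hBsub
  -- the open set U
  set U : Set X := (fun y => y - x₀) ⁻¹' B' with hUdef
  have hUopen : IsOpen U := (isOpen_interior).preimage (continuous_id.sub continuous_const)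
  have hUne : U.Nonempty := ⟨x₀, by simp [hUdef, hB'0]⟩
  obtain ⟨n, hn1, y, ⟨u, huU, rfl⟩, hyU⟩ := hrec U hUopen hUne
  set b : X := u - x₀ with hbdef
  set b' : X := (⇑T)^[n] u - x₀ with hb'def
  have hbB : b ∈ B' := huU
  have hb'B : b' ∈ B' := hyU
  -- key membership
  have hm0 : (⇑T)^[n] u - lam ^ n • u ∈ (M : Set X) :=
    Submodule.le_topologicalClosure _ (hiter n u)
  have hkey : ∃ m ∈ (M : Set X), ∃ c₁ c₂ : ℂ, ‖c₁‖ ≤ 1 ∧ ‖c₂‖ ≤ 1 ∧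
      ((1:ℂ) - μ ^ n) • x₀ = m + c₁ • b' + c₂ • b := by
    by_cases h : ‖lam‖ < 1
    · refine ⟨(⇑T)^[n] u - lam ^ n • u, hm0, -1, lam ^ n, by simp, ?_, ?_⟩
      · rw [norm_pow]
        exact pow_le_one₀ (norm_nonneg _) h.le
      · have hμl : μ = lam := if_pos h
        rw [hμl, hb'def, hbdef]
        module
    · have hlam0 : lam ≠ 0 := by
        intro h0; rw [h0] at h; simp at h
      have hμl : μ = lam⁻¹ := if_neg h
      refine ⟨-((lam⁻¹) ^ n • ((⇑T)^[n] u - lam ^ n • u)), ?_, μ ^ n, -1, ?_, by simp, ?_⟩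
      · exact M.neg_mem (M.smul_mem _ hm0)
      · rw [hμl, norm_pow, norm_inv]
        apply pow_le_one₀ (by positivity)
        rw [inv_le_one_iff₀]
        right
        exact le_of_not_gt h
      · rw [hμl, hb'def, hbdef]
        have hcanc : (lam⁻¹) ^ n • lam ^ n • u = u := by
          rw [smul_smul, ← mul_pow, inv_mul_cancel₀ hlam0, one_pow, one_smul]
        rw [smul_sub, smul_sub, hcanc]
        module
  obtain ⟨m, hmM, c₁, c₂, hc₁, hc₂, heq⟩ := hkey
  -- 1 - μ^n ≠ 0 and inverse bound
  have hμn : ‖μ ^ n‖ ≤ ‖μ‖ := by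
    rw [norm_pow]
    calc ‖μ‖ ^ n ≤ ‖μ‖ ^ 1 :=
      pow_le_pow_of_le_one (norm_nonneg _) hμ.le hn1
    _ = ‖μ‖ := pow_one _
  have hsub : 1 - ‖μ‖ ≤ ‖1 - μ ^ n‖ := by
    calc 1 - ‖μ‖ ≤ 1 - ‖μ ^ n‖ := by linarith
    _ = ‖(1:ℂ)‖ - ‖μ ^ n‖ := by simp
    _ ≤ ‖1 - μ ^ n‖ := norm_sub_norm_le (1:ℂ) (μ ^ n)
  have hne : (1:ℂ) - μ ^ n ≠ 0 := by
    intro h0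
    rw [h0] at hsub
    simp at hsub
    linarith
  have hinvle : ‖(1 - μ ^ n)⁻¹‖ ≤ C := by
    rw [norm_inv, hCdef]
    apply inv_anti₀ (by linarith) hsub
  -- express x₀
  have hx₀eq : x₀ = (1 - μ ^ n)⁻¹ • m + ((1 - μ ^ n)⁻¹ * c₁) • b' + ((1 - μ ^ n)⁻¹ * c₂) • b := by
    have := congrArg (fun w => (1 - μ ^ n)⁻¹ • w) heq
    simp only [smul_add, smul_smul, inv_smul_smul₀ hne] at this
    exact this
  have habs : ∀ c : ℂ, ‖c‖ ≤ 1 → ‖(1 - μ ^ n)⁻¹ * c‖ ≤ ‖(C:ℂ)‖ := by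
    intro c hc
    rw [norm_mul, Complex.norm_real, Real.norm_eq_abs,
      abs_of_pos hCpos]
    calc ‖(1 - μ ^ n)⁻¹‖ * ‖c‖ ≤ C * 1 :=
      mul_le_mul hinvle hc (norm_nonneg _) (by linarith)
    _ = C := mul_one _
  -- members of (C:ℂ) • B' lie such that they land in V₁
  have hCB : ∀ (c : ℂ) (w : X), ‖c‖ ≤ 1 → w ∈ B' → ((1 - μ ^ n)⁻¹ * c) • w ∈ V₁ := by
    intro c w hc hw
    have h1 : ((1 - μ ^ n)⁻¹ * c) • w ∈ ((1 - μ ^ n)⁻¹ * c) • B' := smul_mem_smul_set hw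
    have h2 : ((1 - μ ^ n)⁻¹ * c) • B' ⊆ ((C:ℂ) • B' : Set X) := hB'bal.smul_mono (habs c hc)
    obtain ⟨w', hw', hww'⟩ := h2 h1
    obtain ⟨v, hv, hvw'⟩ := hB'sub hw'
    have hww2 : ((C:ℂ)) • w' = ((1 - μ ^ n)⁻¹ * c) • w := hww'
    have hvw2 : ((C:ℂ))⁻¹ • v = w' := hvw'
    have hv2 : ((1 - μ ^ n)⁻¹ * c) • w = v := by
      rw [← hww2, ← hvw2]
      exact smul_inv_smul₀ hCne v
    rw [hv2]
    exact hv

  -- contradiction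
  have hmem1 : ((1 - μ ^ n)⁻¹ * c₁) • b' ∈ V₁ := hCB c₁ b' hc₁ hb'B
  have hmem2 : ((1 - μ ^ n)⁻¹ * c₂) • b ∈ V₁ := hCB c₂ b hc₂ hbB
  have hmem1' : -(((1 - μ ^ n)⁻¹ * c₁) • b') ∈ V₁ := by
    have := hCB (-c₁) b' (by simpa using hc₁) hb'B
    simpa [mul_neg, neg_smul] using this
  have hmem2' : -(((1 - μ ^ n)⁻¹ * c₂) • b) ∈ V₁ := by
    have := hCB (-c₂) b (by simpa using hc₂) hbB
    simpa [mul_neg, neg_smul] using this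
  have hvV : -(((1 - μ ^ n)⁻¹ * c₁) • b') + -(((1 - μ ^ n)⁻¹ * c₂) • b) ∈ V :=
    hV₁ _ hmem1' _ hmem2'
  apply hV _ hvV
  have : x₀ + (-(((1 - μ ^ n)⁻¹ * c₁) • b') + -(((1 - μ ^ n)⁻¹ * c₂) • b))
      = (1 - μ ^ n)⁻¹ • m := by
    rw [hx₀eq]; abel
  rw [this]
  exact M.smul_mem _ hmM

theorem aux_prod {X : Type*} [AddCommGroup X] [Module ℂ X] [TopologicalSpace X]
    [IsTopologicalAddGroup X] [ContinuousSMul ℂ X] [T2Space X]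
    (T : X →L[ℂ] X)
    (hrec : ∀ U : Set X, IsOpen U → U.Nonempty → ∃ n : ℕ, 1 ≤ n ∧ ((⇑T)^[n] '' U ∩ U).Nonempty)
    (s : Multiset ℂ) (hs : ∀ a ∈ s, ‖a‖ ≠ 1) :
    DenseRange ⇑(Polynomial.aeval (R := ℂ) T
      ((s.map fun a => Polynomial.X - Polynomial.C a).prod)) := by
  induction s using Multiset.induction_on with
  | empty =>
    simp only [Multiset.map_zero, Multiset.prod_zero, map_one]
    have : ⇑(1 : X →L[ℂ] X) = (id : X → X) := rfl
    rw [this]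
    exact denseRange_id
  | cons a s ih =>
    rw [Multiset.map_cons, Multiset.prod_cons, map_mul]
    have hA : DenseRange ⇑(Polynomial.aeval (R := ℂ) T (Polynomial.X - Polynomial.C a)) := by
      have h1 : ⇑(Polynomial.aeval (R := ℂ) T (Polynomial.X - Polynomial.C a))
          = fun x : X => T x - a • x := by
        ext x
        simp [Algebra.algebraMap_eq_smul_one, ContinuousLinearMap.sub_apply,
          ContinuousLinearMap.smul_apply, ContinuousLinearMap.one_apply]
      rw [h1]
      exact aux_dense T hrec a (hs a (Multiset.mem_cons_self a s))
    have hB := ih fun a ha => hs a (Multiset.mem_cons_of_mem ha)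
    have hcoe : ⇑(Polynomial.aeval (R := ℂ) T (Polynomial.X - Polynomial.C a) *
        Polynomial.aeval (R := ℂ) T ((s.map fun a => Polynomial.X - Polynomial.C a).prod))
        = ⇑(Polynomial.aeval (R := ℂ) T (Polynomial.X - Polynomial.C a)) ∘
          ⇑(Polynomial.aeval (R := ℂ) T ((s.map fun a => Polynomial.X - Polynomial.C a).prod))
        := rfl
    rw [hcoe]
    exact hA.comp hB (Polynomial.aeval (R := ℂ) T (Polynomial.X - Polynomial.C a)).continuous


/-- For a topologically recurrent continuous linear operator `T` on a complex Hausdorff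
topological vector space, `T - λ` has dense range for every `λ` with `|λ| ≠ 1`, and
consequently `p(T)` has dense range for every complex polynomial `p` with no unimodular
root. -/
theorem stmt6 {X : Type*} [AddCommGroup X] [Module ℂ X] [TopologicalSpace X]
    [IsTopologicalAddGroup X] [ContinuousSMul ℂ X] [T2Space X]
    (T : X →L[ℂ] X) (hrec : TopologicallyRecurrent ⇑T) :
    (∀ lam : ℂ, ‖lam‖ ≠ 1 → DenseRange fun x : X => T x - lam • x) ∧
    (∀ p : Polynomial ℂ, (∀ z : ℂ, ‖z‖ = 1 → ¬ p.IsRoot z) →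
      DenseRange ⇑(Polynomial.aeval (R := ℂ) T p)) := by
  have hrec' : ∀ U : Set X, IsOpen U → U.Nonempty →
      ∃ n : ℕ, 1 ≤ n ∧ ((⇑T)^[n] '' U ∩ U).Nonempty := hrec
  refine ⟨fun lam hlam => aux_dense T hrec' lam hlam, fun p hp => ?_⟩
  have hp0 : p ≠ 0 := by
    intro h0
    exact hp 1 (by simp) (by simp [h0, Polynomial.IsRoot])
  have heq : p = Polynomial.C p.leadingCoeff *
      (p.roots.map fun a => Polynomial.X - Polynomial.C a).prod :=
    (IsAlgClosed.splits p).eq_prod_roots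
  have haeval : Polynomial.aeval (R := ℂ) T p
      = algebraMap ℂ (X →L[ℂ] X) p.leadingCoeff *
        Polynomial.aeval (R := ℂ) T ((p.roots.map fun a => Polynomial.X - Polynomial.C a).prod)
      := by
    conv_lhs => rw [heq]
    rw [map_mul, Polynomial.aeval_C]
  rw [haeval]
  have hQ : DenseRange ⇑(Polynomial.aeval (R := ℂ) T
      ((p.roots.map fun a => Polynomial.X - Polynomial.C a).prod)) :=
    aux_prod T hrec' p.roots fun a ha hab =>
      hp a hab (Polynomial.isRoot_of_mem_roots ha)
  have hc : p.leadingCoeff ≠ 0 := Polynomial.leadingCoeff_ne_zero.mpr hp0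
  have hcoe : ⇑(algebraMap ℂ (X →L[ℂ] X) p.leadingCoeff *
      Polynomial.aeval (R := ℂ) T ((p.roots.map fun a => Polynomial.X - Polynomial.C a).prod))
      = (fun y : X => p.leadingCoeff • y) ∘
        ⇑(Polynomial.aeval (R := ℂ) T
          ((p.roots.map fun a => Polynomial.X - Polynomial.C a).prod)) := by
    ext x
    simp [Algebra.algebraMap_eq_smul_one, ContinuousLinearMap.mul_apply,
      ContinuousLinearMap.smul_apply, ContinuousLinearMap.one_apply]
  rw [hcoe]
  have hsurj : Function.Surjective (fun y : X => p.leadingCoeff • y) :=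
    fun y => ⟨p.leadingCoeff⁻¹ • y, smul_inv_smul₀ hc y⟩
  exact hsurj.denseRange.comp hQ (continuous_const_smul _)
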